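/- Let q and p be odd integers with 2 < p < q. Let c, c', s ∈ ℤⁿ be integer vectors such that c'[i] ≡ c[i] (mod 2) and |c'[i] − (p/q)·c[i]| ≤ 1 for every index i. If |[c·s]_q| < q/2 − (q/p)·‖s‖₁, then |[c'·s]_p| ≤ (p/q)·|[c·s]_q| + ‖s‖₁ < p/2; that is, the noise after modulus reduction is scaled down by roughly the factor p/q up to an additive term ‖s‖₁. -/

import Mathlib

lemma bmod_eq_self_of_two_mul_abs_lt (d : ℤ) (p : ℕ) (hp : 0 < p) (h : 2 * |d| < p) :
    d.bmod p = d := by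
  have hdvd : (p:ℤ) ∣ d.bmod p - d := Int.dvd_bmod_sub_self
  have h1 := Int.le_bmod (x := d) hp
  have h2 := Int.bmod_lt (x := d) hp
  have hda : -|d| ≤ d ∧ d ≤ |d| := ⟨neg_abs_le d, le_abs_self d⟩
  have hz : d.bmod p - d = 0 := by
    refine Int.eq_zero_of_abs_lt_dvd hdvd ?_
    rw [abs_lt]
    omega
  omega

/-- Modulus reduction scales the noise down by roughly `p/q`, up to an additive
term `‖s‖₁` (Lemma 5 of BGV, second part).  `Int.bmod x q` is the representative
of `x` modulo `q` in the symmetric interval `[-q/2, q/2)`. -/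
theorem modulus_reduction_noise_bound (n p q : ℕ) (hp_odd : Odd p) (hq_odd : Odd q)
    (hp : 2 < p) (hpq : p < q)
    (c c' s : Fin n → ℤ)
    (hparity : ∀ i, c' i ≡ c i [ZMOD 2])
    (hclose : ∀ i, |(c' i : ℚ) - (p : ℚ) / (q : ℚ) * (c i : ℚ)| ≤ 1)
    (hnoise : ((|Int.bmod (∑ i, c i * s i) q| : ℤ) : ℚ) <
      (q : ℚ) / 2 - (q : ℚ) / (p : ℚ) * ∑ i, |(s i : ℚ)|) :
    ((|Int.bmod (∑ i, c' i * s i) p| : ℤ) : ℚ) ≤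
      (p : ℚ) / (q : ℚ) * ((|Int.bmod (∑ i, c i * s i) q| : ℤ) : ℚ) + ∑ i, |(s i : ℚ)| ∧
    (p : ℚ) / (q : ℚ) * ((|Int.bmod (∑ i, c i * s i) q| : ℤ) : ℚ) + ∑ i, |(s i : ℚ)| <
      (p : ℚ) / 2 := by
  have hp0 : (0:ℚ) < p := by exact_mod_cast Nat.zero_lt_of_lt hp
  have hq0 : (0:ℚ) < q := by exact_mod_cast Nat.zero_lt_of_lt (hp.trans hpq)
  set A := ∑ i, c i * s i with hA
  set B := ∑ i, c' i * s i with hB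
  set e := Int.bmod A q with he
  set S : ℚ := ∑ i, |(s i : ℚ)| with hS
  have hS0 : 0 ≤ S := Finset.sum_nonneg fun i _ => abs_nonneg _
  have hecast : ((|e| : ℤ) : ℚ) = |(e:ℚ)| := by push_cast; ring
  obtain ⟨k, hk⟩ : (q:ℤ) ∣ e - A := Int.dvd_bmod_sub_self
  set d := B + p * k with hd
  have hbd : Int.bmod B p = Int.bmod d p := by
    rw [hd, Int.add_mul_bmod_self_left]
  have hkq : (k:ℚ) = ((e:ℚ) - (A:ℚ)) / q := by
    have : ((e:ℚ) - A) = q * k := by exact_mod_cast hk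
    field_simp [this]
    linarith
  have hsum : ∑ i, ((c' i : ℚ) - (p:ℚ)/(q:ℚ) * c i) * s i
      = (B:ℚ) - (p:ℚ)/(q:ℚ) * (A:ℚ) := by
    push_cast [hA, hB]
    rw [Finset.mul_sum, ← Finset.sum_sub_distrib]
    exact Finset.sum_congr rfl fun i _ => by ring
  have hdq : (d:ℚ) = (∑ i, ((c' i : ℚ) - (p:ℚ)/(q:ℚ) * c i) * s i)
      + (p:ℚ)/(q:ℚ) * e := by
    push_cast [hd]
    rw [hkq, hsum]
    field_simp
    ring
  have hestim : |(d:ℚ)| ≤ (p:ℚ)/(q:ℚ) * |(e:ℚ)| + S := by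
    rw [hdq]
    calc |(∑ i, ((c' i : ℚ) - (p:ℚ)/(q:ℚ) * c i) * s i) + (p:ℚ)/(q:ℚ) * e|
        ≤ |∑ i, ((c' i : ℚ) - (p:ℚ)/(q:ℚ) * c i) * s i| + |(p:ℚ)/(q:ℚ) * e| :=
          abs_add_le _ _
      _ ≤ S + (p:ℚ)/(q:ℚ) * |(e:ℚ)| := by
          gcongr
          · calc |∑ i, ((c' i : ℚ) - (p:ℚ)/(q:ℚ) * c i) * s i|
                ≤ ∑ i, |((c' i : ℚ) - (p:ℚ)/(q:ℚ) * c i) * s i| :=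
                  Finset.abs_sum_le_sum_abs _ _
              _ ≤ S := by
                  rw [hS]
                  refine Finset.sum_le_sum fun i _ => ?_
                  rw [abs_mul]
                  calc |(c' i : ℚ) - (p:ℚ)/(q:ℚ) * c i| * |(s i : ℚ)|
                      ≤ 1 * |(s i : ℚ)| := by
                        gcongr
                        exact hclose i
                    _ = |(s i : ℚ)| := one_mul _
          · rw [abs_mul, abs_of_nonneg (by positivity : (0:ℚ) ≤ (p:ℚ)/(q:ℚ))]
      _ = (p:ℚ)/(q:ℚ) * |(e:ℚ)| + S := by ring
  have hkey : (p:ℚ)/(q:ℚ) * ((q:ℚ)/2 - (q:ℚ)/(p:ℚ) * S) = (p:ℚ)/2 - S := by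
    field_simp
  rw [hecast] at hnoise
  have hsecond : (p:ℚ)/(q:ℚ) * |(e:ℚ)| + S < (p:ℚ)/2 := by
    have hpq0 : (0:ℚ) < (p:ℚ)/(q:ℚ) := by positivity
    have := mul_lt_mul_of_pos_left hnoise hpq0
    rw [hkey] at this
    linarith
  have hdsmall : |(d:ℚ)| < (p:ℚ)/2 := lt_of_le_of_lt hestim hsecond
  have hdint : 2 * |d| < (p:ℤ) := by
    have : ((2 * |d| : ℤ) : ℚ) < (p:ℚ) := by push_cast; linarith
    exact_mod_cast this
  have hbmodd : Int.bmod d p = d :=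
    bmod_eq_self_of_two_mul_abs_lt d p (by omega) hdint
  rw [hbd, hbmodd]
  constructor
  · calc ((|d| : ℤ) : ℚ) = |(d:ℚ)| := by push_cast; ring
      _ ≤ (p:ℚ)/(q:ℚ) * |(e:ℚ)| + S := hestim
      _ = (p:ℚ)/(q:ℚ) * ((|e| : ℤ) : ℚ) + S := by rw [hecast]
  · rw [hecast]
    exact hsecond
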